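/- Let V be a 2n-dimensional complex vector space, let ω be a nondegenerate alternating bilinear form on V, and let 0 = V₀ ⊂ V₁ ⊂ ⋯ ⊂ V_{2n} = V be a full flag. Then there exists a basis {e₁,…,e_{2n}} of V such that each V_i is spanned by {e₁,…,e_i}, and there is a fixed-point-free involutive permutation σ of the index set {1,…,2n} with ω(e_i, e_{σ(i)}) = ±1 for all i and ω(e_i, e_j) = 0 whenever j ≠ σ(i). -/

import Mathlib

open Submodule Module

section Hyp

variable {n : ℕ} {V : Type} [AddCommGroup V] [Module ℂ V] [FiniteDimensional ℂ V]

set_option linter.unusedSectionVars false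

private lemma span_prefix_le (F : Fin (2*n+1) → Submodule ℂ V) (hmono : Monotone F)
    (v : Fin (2*n) → V) (hmem : ∀ k, v k ∈ F k.succ) (j : Fin (2*n+1)) :
    span ℂ (v '' {k : Fin (2*n) | (k:ℕ) < (j:ℕ)}) ≤ F j := by
  rw [span_le]
  rintro x ⟨k, hk, rfl⟩
  exact hmono (show k.succ ≤ j by rw [Fin.le_def, Fin.val_succ]; exact hk) (hmem k)

private lemma exists_adapted (F : Fin (2*n+1) → Submodule ℂ V) (hmono : Monotone F)
    (hF : ∀ i, finrank ℂ (F i) = (i:ℕ)) :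
    ∃ v : Fin (2*n) → V, (∀ k, v k ∈ F k.succ) ∧
      (∀ j : Fin (2*n+1), F j = span ℂ (v '' {k : Fin (2*n) | (k:ℕ) < (j:ℕ)})) := by
  have hstep : ∀ k : Fin (2*n), ∃ x, x ∈ F k.succ ∧ x ∉ F k.castSucc := by
    intro k
    by_contra h
    push_neg at h
    have hle : F k.succ ≤ F k.castSucc := fun x hx => h x hx
    have h2 := Submodule.finrank_mono hle
    rw [hF, hF, Fin.val_succ, Fin.coe_castSucc] at h2
    omega
  choose v hv1 hv2 using hstep
  refine ⟨v, hv1, ?_⟩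
  have key : ∀ jn : ℕ, ∀ hj : jn ≤ 2*n,
      F ⟨jn, by omega⟩ = span ℂ (v '' {k : Fin (2*n) | (k:ℕ) < jn}) := by
    intro jn
    induction jn with
    | zero =>
      intro _
      have h0 : finrank ℂ (F ⟨0, by omega⟩) = 0 := hF _
      have hbot : F ⟨0, by omega⟩ = ⊥ := Submodule.finrank_eq_zero.mp h0
      have hempty : {k : Fin (2*n) | (k:ℕ) < 0} = (∅ : Set (Fin (2*n))) := by
        ext k; simp
      rw [hbot, hempty]
      simp
    | succ jn IH =>
      intro hj
      have hjn : jn ≤ 2*n := by omega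
      have hjn' : jn < 2*n := by omega
      set k : Fin (2*n) := ⟨jn, hjn'⟩ with hk
      have hle1 : F k.castSucc ⊔ span ℂ {v k} ≤ F k.succ := by
        refine sup_le (hmono ?_) ?_
        · rw [Fin.le_def]; simp
        · rw [span_le, Set.singleton_subset_iff]; exact hv1 k
      have hlt : F k.castSucc < F k.castSucc ⊔ span ℂ {v k} := by
        refine lt_of_le_of_ne le_sup_left ?_
        intro heq
        have hvk : v k ∈ F k.castSucc := by
          rw [heq]
          exact Submodule.mem_sup_right (subset_span rfl)
        exact hv2 k hvk
      have h1 := Submodule.finrank_lt_finrank_of_lt hlt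
      have h2 := Submodule.finrank_mono hle1
      have hr1 : finrank ℂ (F k.castSucc) = jn := by rw [hF]; simp [hk]
      have hr2 : finrank ℂ (F k.succ) = jn + 1 := by rw [hF]; simp [hk]
      have hsup : F k.succ = F k.castSucc ⊔ span ℂ {v k} :=
        (Submodule.eq_of_le_of_finrank_eq hle1 (by omega)).symm
      have hsetsplit : {k' : Fin (2*n) | (k':ℕ) < jn + 1}
          = {k' : Fin (2*n) | (k':ℕ) < jn} ∪ {k} := by
        ext k'
        simp only [Set.mem_setOf_eq, Set.mem_union, Set.mem_singleton_iff]
        constructor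
        · intro h
          rcases Nat.lt_succ_iff_lt_or_eq.mp h with h' | h'
          · exact Or.inl h'
          · exact Or.inr (Fin.ext h')
        · rintro (h' | rfl)
          · omega
          · simp [hk]
      have IH' : F k.castSucc = span ℂ (v '' {k' : Fin (2*n) | (k':ℕ) < jn}) := IH hjn
      calc F ⟨jn+1, by omega⟩ = F k.succ := rfl
        _ = F k.castSucc ⊔ span ℂ {v k} := hsup
        _ = span ℂ (v '' {k' : Fin (2*n) | (k':ℕ) < jn + 1}) := by
            rw [IH', hsetsplit, Set.image_union, Set.image_singleton, span_union]
  intro j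
  have := key (j : ℕ) (by omega)
  simpa using this


private lemma main_ind (ω : LinearMap.BilinForm ℂ V) (halt : ω.IsAlt)
    (F : Fin (2*n+1) → Submodule ℂ V) (hmono : Monotone F)
    (hF : ∀ i, finrank ℂ (F i) = (i:ℕ)) :
    ∀ i : ℕ, i ≤ 2*n → ∃ (v : Fin (2*n) → V) (σ : Fin (2*n) → Fin (2*n)),
      (∀ k, v k ∈ F k.succ) ∧
      (∀ j : Fin (2*n+1), F j = span ℂ (v '' {k : Fin (2*n) | (k:ℕ) < (j:ℕ)})) ∧
      (∀ k, σ (σ k) = k) ∧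
      (∀ k : Fin (2*n), ¬ ((k:ℕ) < i) → σ k = k) ∧
      (∀ k : Fin (2*n), (k:ℕ) < i → σ k ≠ k →
        ((σ k : ℕ) < i ∧ (ω (v k) (v (σ k)) = 1 ∨ ω (v k) (v (σ k)) = -1))) ∧
      (∀ k l : Fin (2*n), (k:ℕ) < i → (l:ℕ) < i → l ≠ σ k → ω (v k) (v l) = 0) := by
  intro i
  induction i with
  | zero =>
    intro _
    obtain ⟨v, h1, h2⟩ := exists_adapted F hmono hF
    exact ⟨v, id, h1, h2, fun k => rfl, fun k _ => rfl,
      fun k h => absurd h (by omega), fun k l h => absurd h (by omega)⟩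
  | succ i IH =>
    intro hi1
    obtain ⟨v, σ, hmem, hspan, hinv, htriv, hpair, hzero⟩ := IH (by omega)
    classical
    have hi2n : i < 2*n := by omega
    set k₀ : Fin (2*n) := ⟨i, hi2n⟩ with hk₀def
    have hσk₀ : σ k₀ = k₀ := htriv k₀ (lt_irrefl i)
    have hk₀i : (k₀:ℕ) = i := rfl
    have hfin : ∀ (p : Fin (2*n)), σ p ≠ p → (p:ℕ) < i := by
      intro p hp; by_contra h; exact hp (htriv p h)
    have hlt_of : ∀ k : Fin (2*n), (k:ℕ) < i+1 → k ≠ k₀ → (k:ℕ) < i := by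
      intro k h1 h2
      rcases Nat.lt_succ_iff_lt_or_eq.mp h1 with h | h
      · exact h
      · exact absurd (Fin.ext h) h2
    have hnek₀ : ∀ k : Fin (2*n), (k:ℕ) < i → k ≠ k₀ := by
      intro k h1 h2
      rw [h2] at h1
      exact absurd h1 (lt_irrefl i)
    -- partner-avoidance helpers
    have hne_partner : ∀ p l : Fin (2*n), σ p ≠ p → σ l = l → l ≠ σ p := by
      intro p l hp hl hlp
      have : σ l = p := by rw [hlp, hinv]
      rw [hl] at this
      rw [this] at hlp
      exact hp hlp.symm
    set P : Finset (Fin (2*n)) := Finset.univ.filter (fun p => σ p ≠ p) with hPdef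
    have hmemP : ∀ p, p ∈ P ↔ σ p ≠ p := by intro p; simp [hPdef]
    set c : Fin (2*n) → ℂ := fun p => ω (v k₀) (v (σ p)) * ω (v p) (v (σ p)) with hcdef
    set w : V := v k₀ - ∑ p ∈ P, c p • v p with hwdef
    have hexp : ∀ x : V, ω w x = ω (v k₀) x - ∑ p ∈ P, c p * ω (v p) x := by
      intro x
      rw [hwdef]
      simp [map_sub, map_sum, map_smul, LinearMap.sub_apply, LinearMap.sum_apply,
        LinearMap.smul_apply, smul_eq_mul]
    have hwpair : ∀ l : Fin (2*n), (l:ℕ) < i → σ l ≠ l → ω w (v l) = 0 := by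
      intro l hli hl
      obtain ⟨hσli, hval⟩ := hpair l hli hl
      have hσσ : σ (σ l) = l := hinv l
      have hσlne : σ (σ l) ≠ σ l := by rw [hσσ]; exact fun h => hl h.symm
      have hval2 := (hpair (σ l) hσli hσlne).2
      rw [hσσ] at hval2
      have hsum : ∑ p ∈ P, c p * ω (v p) (v l) = c (σ l) * ω (v (σ l)) (v l) := by
        refine Finset.sum_eq_single (σ l) ?_ ?_
        · intro p hp hpne
          have hpP := (hmemP p).1 hp
          have hlσp : l ≠ σ p := by
            intro hlp
            apply hpne
            rw [hlp, hinv]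
          rw [hzero p l (hfin p hpP) hli hlσp, mul_zero]
        · intro h
          exact absurd ((hmemP (σ l)).2 hσlne) h
      rw [hexp, hsum, hcdef]
      simp only []
      rw [hσσ]
      rcases hval2 with h | h <;> rw [h] <;> ring
    have hwunp : ∀ l : Fin (2*n), (l:ℕ) < i → σ l = l → ω w (v l) = ω (v k₀) (v l) := by
      intro l hli hl
      rw [hexp]
      have hsum : ∑ p ∈ P, c p * ω (v p) (v l) = 0 := by
        refine Finset.sum_eq_zero ?_
        intro p hp
        have hpP := (hmemP p).1 hp
        rw [hzero p l (hfin p hpP) hli (hne_partner p l hpP hl), mul_zero]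
      rw [hsum, sub_zero]
    have hwmem : w ∈ F k₀.succ := by
      rw [hwdef]
      refine sub_mem (hmem k₀) (sum_mem ?_)
      intro p hp
      refine smul_mem _ _ (hmono ?_ (hmem p))
      rw [Fin.le_def, Fin.val_succ, Fin.val_succ]
      have := hfin p ((hmemP p).1 hp)
      rw [hk₀i]
      omega

    have hk₀eq : v k₀ = w + ∑ p ∈ P, c p • v p := by
      rw [hwdef, sub_add_cancel]
    by_cases hcaseB : ∃ l : Fin (2*n), (l:ℕ) < i ∧ σ l = l ∧ ω w (v l) ≠ 0
    case neg =>
      push_neg at hcaseB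
      have hwzero : ∀ l : Fin (2*n), (l:ℕ) < i → ω w (v l) = 0 := by
        intro l hl
        by_cases h : σ l = l
        · exact hcaseB l hl h
        · exact hwpair l hl h
      set v' : Fin (2*n) → V := Function.update v k₀ w with hv'def
      have hv'k₀ : v' k₀ = w := Function.update_self _ _ _
      have hv'ne : ∀ k, k ≠ k₀ → v' k = v k := fun k h => Function.update_of_ne h _ _
      have hmem1 : ∀ k, v' k ∈ F k.succ := by
        intro k
        by_cases hk : k = k₀
        · rw [hk, hv'k₀]; exact hwmem
        · rw [hv'ne k hk]; exact hmem k
      refine ⟨v', σ, hmem1, ?_, hinv, ?_, ?_, ?_⟩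
      · -- spans
        intro j
        refine le_antisymm ?_ (span_prefix_le F hmono v' hmem1 j)
        rw [hspan j, span_le]
        rintro x ⟨k, hk, rfl⟩
        by_cases hkk : k = k₀
        · rw [hkk, hk₀eq]
          have hk' : (k₀:ℕ) < (j:ℕ) := by rw [← hkk]; exact hk
          refine add_mem ?_ (sum_mem ?_)
          · have hmemim : v' k₀ ∈ v' '' {k' : Fin (2*n) | (k':ℕ) < (j:ℕ)} := ⟨k₀, hk', rfl⟩
            rw [hv'k₀] at hmemim
            exact subset_span hmemim
          · intro p hp
            have hpi := hfin p ((hmemP p).1 hp)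
            have hpj : (p:ℕ) < (j:ℕ) := by
              rw [hk₀i] at hk'
              omega
            have hmemim : v' p ∈ v' '' {k' : Fin (2*n) | (k':ℕ) < (j:ℕ)} := ⟨p, hpj, rfl⟩
            rw [hv'ne p (hnek₀ p hpi)] at hmemim
            exact smul_mem _ _ (subset_span hmemim)
        · have hmemim : v' k ∈ v' '' {k' : Fin (2*n) | (k':ℕ) < (j:ℕ)} := ⟨k, hk, rfl⟩
          rw [hv'ne k hkk] at hmemim
          exact subset_span hmemim
      · intro k hk
        exact htriv k (fun h => hk (by omega))
      · intro k hk hkne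
        have hki : (k:ℕ) < i := hfin k hkne
        obtain ⟨h1, h2⟩ := hpair k hki hkne
        refine ⟨by omega, ?_⟩
        rw [hv'ne k (hnek₀ k hki), hv'ne (σ k) (hnek₀ (σ k) h1)]
        exact h2
      · intro k l hk hl hlne
        by_cases hkk : k = k₀
        · rw [hkk, hσk₀] at hlne
          have hli : (l:ℕ) < i := hlt_of l hl hlne
          rw [hkk, hv'k₀, hv'ne l hlne]
          exact hwzero l hli
        · have hki : (k:ℕ) < i := hlt_of k hk hkk
          by_cases hlk : l = k₀
          · rw [hlk, hv'ne k hkk, hv'k₀]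
            have h0 : ω w (v k) = 0 := hwzero k hki
            have hneg := halt.neg_eq w (v k)
            rw [h0, neg_zero] at hneg
            exact hneg.symm
          · have hli : (l:ℕ) < i := hlt_of l hl hlk
            rw [hv'ne k hkk, hv'ne l hlk]
            exact hzero k l hki hli hlne
    case pos =>
      obtain ⟨l₁, hl₁i, hl₁σ, hl₁ne⟩ := hcaseB
      set S : Finset (Fin (2*n)) :=
        Finset.univ.filter (fun l => (l:ℕ) < i ∧ σ l = l ∧ ω w (v l) ≠ 0) with hSdef
      have hmemS : ∀ l, l ∈ S ↔ ((l:ℕ) < i ∧ σ l = l ∧ ω w (v l) ≠ 0) := by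
        intro l; simp [hSdef]
      have hSne : S.Nonempty := ⟨l₁, (hmemS l₁).2 ⟨hl₁i, hl₁σ, hl₁ne⟩⟩
      set m : Fin (2*n) := S.min' hSne with hmdef
      obtain ⟨hmi, hmσ, hmne⟩ := (hmemS m).1 (S.min'_mem hSne)
      have hmin : ∀ l : Fin (2*n), (l:ℕ) < i → σ l = l → ω w (v l) ≠ 0 → m ≤ l := by
        intro l h1 h2 h3
        exact S.min'_le l ((hmemS l).2 ⟨h1, h2, h3⟩)
      set c₀ : ℂ := ω w (v m) with hc₀def
      have hc₀ : c₀ ≠ 0 := hmne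
      have hmk₀ : m ≠ k₀ := hnek₀ m hmi
      set d : Fin (2*n) → ℂ := fun l => c₀⁻¹ * ω w (v l) with hddef
      set v' : Fin (2*n) → V := fun k =>
        if k = k₀ then c₀⁻¹ • w
        else if (k:ℕ) < i ∧ σ k = k ∧ k ≠ m then v k - d k • v m
        else v k with hv'def
      set σ' : Fin (2*n) → Fin (2*n) := fun k =>
        if k = k₀ then m else if k = m then k₀ else σ k with hσ'def
      have hv'k₀ : v' k₀ = c₀⁻¹ • w := by rw [hv'def]; simp
      have hv'm : v' m = v m := by
        rw [hv'def]; simp [hmk₀]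
      have hv'unp : ∀ l : Fin (2*n), (l:ℕ) < i → σ l = l → l ≠ m →
          v' l = v l - d l • v m := by
        intro l h1 h2 h3
        rw [hv'def]
        simp only []
        rw [if_neg (hnek₀ l h1), if_pos ⟨h1, h2, h3⟩]
      have hv'else : ∀ l : Fin (2*n), l ≠ k₀ → ¬ ((l:ℕ) < i ∧ σ l = l ∧ l ≠ m) →
          v' l = v l := by
        intro l h1 h2
        rw [hv'def]
        simp only []
        rw [if_neg h1, if_neg h2]
      have hv'pair : ∀ l : Fin (2*n), σ l ≠ l → v' l = v l := by
        intro l hl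
        refine hv'else l ?_ ?_
        · intro h; rw [h] at hl; exact hl hσk₀
        · rintro ⟨-, h2, -⟩; exact hl h2
      have hσ'k₀ : σ' k₀ = m := by rw [hσ'def]; simp
      have hσ'm : σ' m = k₀ := by rw [hσ'def]; simp [hmk₀]
      have hσ'o : ∀ k, k ≠ k₀ → k ≠ m → σ' k = σ k := by
        intro k h1 h2; rw [hσ'def]; simp [h1, h2]
      have hmem1 : ∀ k, v' k ∈ F k.succ := by
        intro k
        by_cases h1 : k = k₀
        · rw [h1, hv'k₀]
          exact smul_mem _ _ hwmem
        · by_cases h2 : (k:ℕ) < i ∧ σ k = k ∧ k ≠ m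
          · obtain ⟨ha, hb, hc⟩ := h2
            rw [hv'unp k ha hb hc]
            by_cases hml : (m:ℕ) ≤ (k:ℕ)
            · refine sub_mem (hmem k) (smul_mem _ _ ?_)
              exact hmono (by rw [Fin.le_def, Fin.val_succ, Fin.val_succ]; omega) (hmem m)
            · have hd0 : d k = 0 := by
                by_cases h : ω w (v k) = 0
                · rw [hddef]; simp [h]
                · have := hmin k ha hb h
                  rw [Fin.le_def] at this
                  omega
              rw [hd0, zero_smul, sub_zero]
              exact hmem k
          · rw [hv'else k h1 h2]
            exact hmem k
      have hspan1 : ∀ j : Fin (2*n+1), F j = span ℂ (v' '' {k : Fin (2*n) | (k:ℕ) < (j:ℕ)}) := by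
        intro j
        refine le_antisymm ?_ (span_prefix_le F hmono v' hmem1 j)
        rw [hspan j, span_le]
        rintro x ⟨k, hk, rfl⟩
        by_cases h1 : k = k₀
        · have hk' : (k₀:ℕ) < (j:ℕ) := h1 ▸ hk
          rw [h1, hk₀eq]
          have hw_in : w ∈ span ℂ (v' '' {k' : Fin (2*n) | (k':ℕ) < (j:ℕ)}) := by
            have h2 : v' k₀ ∈ v' '' {k' : Fin (2*n) | (k':ℕ) < (j:ℕ)} := ⟨k₀, hk', rfl⟩
            have h3 := smul_mem (span ℂ (v' '' {k' : Fin (2*n) | (k':ℕ) < (j:ℕ)})) c₀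
              (subset_span h2)
            rw [hv'k₀, smul_smul, mul_inv_cancel₀ hc₀, one_smul] at h3
            exact h3
          refine add_mem hw_in (sum_mem ?_)
          intro p hp
          have hpi := hfin p ((hmemP p).1 hp)
          have hpj : (p:ℕ) < (j:ℕ) := by rw [hk₀i] at hk'; omega
          have h2 : v' p ∈ v' '' {k' : Fin (2*n) | (k':ℕ) < (j:ℕ)} := ⟨p, hpj, rfl⟩
          rw [hv'pair p ((hmemP p).1 hp)] at h2
          exact smul_mem _ _ (subset_span h2)
        · by_cases h2 : (k:ℕ) < i ∧ σ k = k ∧ k ≠ m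
          · obtain ⟨ha, hb, hc⟩ := h2
            by_cases h3 : ω w (v k) = 0
            · have hvv : v' k = v k := by
                rw [hv'unp k ha hb hc, hddef]
                simp [h3]
              exact subset_span ⟨k, hk, hvv⟩
            · have hmk : (m:ℕ) ≤ (k:ℕ) := by
                have := hmin k ha hb h3
                rw [Fin.le_def] at this
                exact this
              have hmj : (m:ℕ) < (j:ℕ) := by
                have : (k:ℕ) < (j:ℕ) := hk
                omega
              have hva : v k = v' k + d k • v m := by
                rw [hv'unp k ha hb hc, sub_add_cancel]
              rw [hva]
              refine add_mem (subset_span ⟨k, hk, rfl⟩) (smul_mem _ _ ?_)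
              rw [← hv'm]
              exact subset_span ⟨m, hmj, rfl⟩
          · exact subset_span ⟨k, hk, hv'else k h1 h2⟩
      have hinv1 : ∀ k, σ' (σ' k) = k := by
        intro k
        by_cases h1 : k = k₀
        · rw [h1, hσ'k₀, hσ'm]
        · by_cases h2 : k = m
          · rw [h2, hσ'm, hσ'k₀]
          · rw [hσ'o k h1 h2]
            have hσkk₀ : σ k ≠ k₀ := by
              intro h; apply h1; rw [← hinv k, h, hσk₀]
            have hσkm : σ k ≠ m := by
              intro h; apply h2; rw [← hinv k, h, hmσ]
            rw [hσ'o (σ k) hσkk₀ hσkm, hinv]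
      have htriv1 : ∀ k : Fin (2*n), ¬ ((k:ℕ) < i+1) → σ' k = k := by
        intro k hki
        have h1 : k ≠ k₀ := by
          intro h; exact hki (by rw [h, hk₀i]; omega)
        have h2 : k ≠ m := by
          intro h; apply hki; rw [h]; omega
        rw [hσ'o k h1 h2]
        exact htriv k (fun h => hki (by omega))
      have hωsmul : ∀ (a : ℂ) (x y : V), ω (a • x) y = a * ω x y := by
        intro a x y
        simp [map_smul, LinearMap.smul_apply, smul_eq_mul]
      have hbil1 : ω (v' k₀) (v' m) = 1 := by
        rw [hv'k₀, hv'm, hωsmul, ← hc₀def, inv_mul_cancel₀ hc₀]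
      have hbil2 : ω (v' m) (v' k₀) = -1 := by
        have := halt.neg_eq (v' k₀) (v' m)
        rw [hbil1] at this
        exact this.symm
      have lemA : ∀ l : Fin (2*n), (l:ℕ) < i + 1 → l ≠ m → ω (v' k₀) (v' l) = 0 := by
        intro l h1 h2
        by_cases h3 : l = k₀
        · rw [h3]; exact halt.self_eq_zero _
        · have h4 : (l:ℕ) < i := hlt_of l h1 h3
          by_cases h5 : σ l = l
          · rw [hv'k₀, hv'unp l h4 h5 h2, hωsmul]
            have hex : ω w (v l - d l • v m) = ω w (v l) - d l * ω w (v m) := by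
              simp [map_sub, map_smul, smul_eq_mul]
            rw [hex, hddef]
            simp only []
            rw [← hc₀def]
            field_simp
            ring
          · rw [hv'k₀, hv'pair l h5, hωsmul, hwpair l h4 h5, mul_zero]
      have lemB : ∀ l : Fin (2*n), (l:ℕ) < i + 1 → l ≠ k₀ → ω (v' m) (v' l) = 0 := by
        intro l h1 h2
        have h4 : (l:ℕ) < i := hlt_of l h1 h2
        rw [hv'm]
        by_cases h5 : l = m
        · rw [h5, hv'm]; exact halt.self_eq_zero _
        · by_cases h6 : σ l = l
          · rw [hv'unp l h4 h6 h5]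
            have e1 : ω (v m) (v l) = 0 := hzero m l hmi h4 (by rw [hmσ]; exact h5)
            have e2 : ω (v m) (v m) = 0 := halt.self_eq_zero _
            simp [map_sub, map_smul, smul_eq_mul, e1, e2]
          · rw [hv'pair l h6]
            exact hzero m l hmi h4 (by rw [hmσ]; exact h5)
      have hpair1 : ∀ k : Fin (2*n), (k:ℕ) < i+1 → σ' k ≠ k →
          ((σ' k : ℕ) < i+1 ∧ (ω (v' k) (v' (σ' k)) = 1 ∨ ω (v' k) (v' (σ' k)) = -1)) := by
        intro k hk hkne
        by_cases h1 : k = k₀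
        · rw [h1, hσ'k₀]
          exact ⟨by omega, Or.inl hbil1⟩
        · by_cases h2 : k = m
          · rw [h2, hσ'm]
            exact ⟨by rw [hk₀i]; omega, Or.inr hbil2⟩
          · have hσeq := hσ'o k h1 h2
            rw [hσeq] at hkne ⊢
            have hki : (k:ℕ) < i := hfin k hkne
            obtain ⟨ha, hb⟩ := hpair k hki hkne
            have hσσne : σ (σ k) ≠ σ k := by
              rw [hinv k]; exact fun h => hkne h.symm
            rw [hv'pair k hkne, hv'pair (σ k) hσσne]
            exact ⟨by omega, hb⟩
      have hzero1 : ∀ k l : Fin (2*n), (k:ℕ) < i+1 → (l:ℕ) < i+1 → l ≠ σ' k →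
          ω (v' k) (v' l) = 0 := by
        intro k l hk hl hlne
        by_cases h1 : k = k₀
        · rw [h1, hσ'k₀] at hlne
          rw [h1]
          exact lemA l hl hlne
        · by_cases h2 : k = m
          · rw [h2, hσ'm] at hlne
            rw [h2]
            exact lemB l hl hlne
          · have hki : (k:ℕ) < i := hlt_of k hk h1
            rw [hσ'o k h1 h2] at hlne
            by_cases h3 : σ k = k
            · rw [h3] at hlne
              by_cases h4 : l = k₀
              · rw [h4]
                have hneg := halt.neg_eq (v' k₀) (v' k)
                rw [lemA k (by omega) h2, neg_zero] at hneg
                exact hneg.symm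
              · have hli : (l:ℕ) < i := hlt_of l hl h4
                rw [hv'unp k hki h3 h2]
                have hex : ω (v k - d k • v m) (v' l)
                    = ω (v k) (v' l) - d k * ω (v m) (v' l) := by
                  simp [map_sub, map_smul, LinearMap.sub_apply, LinearMap.smul_apply,
                    smul_eq_mul]
                rw [hex]
                have hB : ω (v m) (v' l) = 0 := by
                  have := lemB l hl h4
                  rw [hv'm] at this
                  exact this
                rw [hB, mul_zero, sub_zero]
                by_cases h5 : l = m
                · rw [h5, hv'm]
                  exact hzero k m hki hmi (by rw [h3]; exact fun hh => h2 hh.symm)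
                · by_cases h6 : σ l = l
                  · rw [hv'unp l hli h6 h5]
                    have e1 : ω (v k) (v l) = 0 := hzero k l hki hli (by rw [h3]; exact hlne)
                    have e2 : ω (v k) (v m) = 0 :=
                      hzero k m hki hmi (by rw [h3]; exact fun hh => h2 hh.symm)
                    simp [map_sub, map_smul, smul_eq_mul, e1, e2]
                  · rw [hv'pair l h6]
                    exact hzero k l hki hli (by rw [h3]; exact hlne)
            · rw [hv'pair k h3]
              by_cases h4 : l = k₀
              · rw [h4, hv'k₀]
                have h0 : ω w (v k) = 0 := hwpair k hki h3
                have hneg := halt.neg_eq w (v k)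
                rw [h0, neg_zero] at hneg
                have : ω (v k) (c₀⁻¹ • w) = c₀⁻¹ * ω (v k) w := by
                  simp [map_smul, smul_eq_mul]
                rw [this, ← hneg, mul_zero]
              · have hli : (l:ℕ) < i := hlt_of l hl h4
                by_cases h5 : l = m
                · rw [h5, hv'm]
                  exact hzero k m hki hmi (hne_partner k m h3 hmσ)
                · by_cases h6 : σ l = l
                  · rw [hv'unp l hli h6 h5]
                    have e1 : ω (v k) (v l) = 0 :=
                      hzero k l hki hli (hne_partner k l h3 h6)
                    have e2 : ω (v k) (v m) = 0 :=
                      hzero k m hki hmi (hne_partner k m h3 hmσ)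
                    simp [map_sub, map_smul, smul_eq_mul, e1, e2]
                  · rw [hv'pair l h6]
                    exact hzero k l hki hli hlne
      exact ⟨v', σ', hmem1, hspan1, hinv1, htriv1, hpair1, hzero1⟩

end Hyp

/-- Given a nondegenerate alternating bilinear form `ω` on a `2n`-dimensional complex vector
space `V` and a full flag in `V`, there is a basis compatible with the flag and hyperbolic
with respect to `ω`. -/
theorem exists_hyperbolic_basis_compatible_with_flag (n : ℕ) (V : Type)
    [AddCommGroup V] [Module ℂ V] [FiniteDimensional ℂ V]
    (hdim : Module.finrank ℂ V = 2 * n)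
    (ω : LinearMap.BilinForm ℂ V) (halt : ω.IsAlt) (hnd : ω.Nondegenerate)
    (F : Fin (2 * n + 1) → Submodule ℂ V) (hmono : Monotone F)
    (hF : ∀ i : Fin (2 * n + 1), Module.finrank ℂ (F i) = (i : ℕ)) :
    ∃ (e : Basis (Fin (2 * n)) ℂ V) (σ : Equiv.Perm (Fin (2 * n))),
      (∀ i : Fin (2 * n + 1),
        F i = Submodule.span ℂ ((fun j => e j) '' {j : Fin (2 * n) | (j : ℕ) < (i : ℕ)})) ∧
      (∀ i, σ (σ i) = i) ∧ (∀ i, σ i ≠ i) ∧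
      (∀ i, ω (e i) (e (σ i)) = 1 ∨ ω (e i) (e (σ i)) = -1) ∧
      (∀ i j, j ≠ σ i → ω (e i) (e j) = 0) := by
  classical
  obtain ⟨v, σ, hmem, hspan, hinv, htriv, hpair, hzero⟩ :=
    main_ind ω halt F hmono hF (2*n) le_rfl
  have hall : ∀ k : Fin (2*n), (k:ℕ) < 2*n := fun k => k.isLt
  have htop : F (Fin.last (2*n)) = ⊤ := by
    apply Submodule.eq_top_of_finrank_eq
    rw [hF, hdim, Fin.val_last]
  have hsetuniv : {k : Fin (2*n) | (k:ℕ) < ((Fin.last (2*n)):ℕ)} = Set.univ := by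
    ext k; simp [Fin.val_last, k.isLt]
  have hletop : ⊤ ≤ Submodule.span ℂ (Set.range v) := by
    rw [← Set.image_univ, ← hsetuniv, ← hspan (Fin.last (2*n)), htop]
  have hcard : Fintype.card (Fin (2*n)) = finrank ℂ V := by simp [hdim]
  set e : Basis (Fin (2*n)) ℂ V := basisOfTopLeSpanOfCardEqFinrank v hletop hcard with hedef
  have hecoe : ⇑e = v := coe_basisOfTopLeSpanOfCardEqFinrank v hletop hcard
  have hfree : ∀ k, σ k ≠ k := by
    intro k hk
    have hfz : ω (v k) = 0 := by
      apply LinearMap.ext_on (top_unique hletop)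
      rintro x ⟨l, rfl⟩
      by_cases hlk : l = k
      · rw [hlk]
        exact halt.self_eq_zero _
      · exact hzero k l (hall k) (hall l) (by rw [hk]; exact hlk)
    have hv0 : v k = 0 := hnd.1 (v k) (fun y => by rw [hfz]; rfl)
    have hne := e.ne_zero k
    rw [hecoe, hv0] at hne
    exact hne rfl
  refine ⟨e, ⟨σ, σ, hinv, hinv⟩, ?_, ?_, ?_, ?_, ?_⟩
  · intro i
    simpa only [hecoe] using hspan i
  · intro k
    exact hinv k
  · intro k
    exact hfree k
  · intro k
    simp only [hecoe, Equiv.coe_fn_mk]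
    exact (hpair k (hall k) (hfree k)).2
  · intro k l hne
    simp only [hecoe, Equiv.coe_fn_mk]
    exact hzero k l (hall k) (hall l) (by simpa using hne)
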